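/- Let 𝒜 ⊆ ℝⁿ, let C : 𝒜 → (alternating trilinear forms on ℝⁿ) be any map, and let f : 𝒜 × ℝⁿ → ℝ be such that for each a ∈ 𝒜 the function α ↦ f(a,α) is continuously differentiable and 2π-periodic in each variable. Assume that for all (a,α) ∈ 𝒜 × ℝⁿ the vector ∂f/∂α(a,α) lies in ker C(a), i.e. C(a)(∂f/∂α(a,α), u, v) = 0 for all u,v ∈ ℝⁿ. Then for every a ∈ 𝒜 and every ν ∈ ℤⁿ with f̂_ν(a) ≠ 0, one has ν ∈ ker C(a), i.e. C(a)(ν, u, v) = 0 for all u,v ∈ ℝⁿ. Equivalently, Sp(f,a) ⊆ ℤⁿ ∩ ker C(a) for every a ∈ 𝒜. -/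

import Mathlib

open MeasureTheory

/-- The `ν`-th Fourier coefficient of a function `g : ℝⁿ → ℂ` that is `2π`-periodic in each
variable: `ĝ_ν = (2π)^{-n} ∫_{[0,2π]ⁿ} g(α) e^{-i ν·α} dα`. -/
noncomputable def fourierCoeffn {n : ℕ} (g : (Fin n → ℝ) → ℂ) (ν : Fin n → ℤ) : ℂ :=
  (1 / (2 * Real.pi) ^ n : ℂ) *
    ∫ α in Set.univ.pi (fun _ : Fin n => Set.Icc (0 : ℝ) (2 * Real.pi)),
      g α * Complex.exp (-(Complex.I * ((∑ k, (ν k : ℝ) * α k : ℝ) : ℂ)))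

/-- The vector `∂f/∂α (a, α) ∈ ℝⁿ` of partial derivatives of `f` with respect to the second
group of variables. -/
noncomputable def dAngle {n : ℕ} (f : (Fin n → ℝ) × (Fin n → ℝ) → ℝ)
    (p : (Fin n → ℝ) × (Fin n → ℝ)) : Fin n → ℝ :=
  fun k => fderiv ℝ (fun α => f (p.1, α)) p.2 (Pi.single k 1)

set_option maxHeartbeats 1000000 in
open Submodule Pointwise in
/-- Translation invariance of the integral over `[0,2π]ⁿ` of a function that is `2π`-periodic in
each variable. -/
theorem statement8_aux_shift {n : ℕ} (G : (Fin n → ℝ) → ℂ) (c : Fin n → ℝ)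
    (hGper : ∀ (μ' : Fin n → ℤ) (x : Fin n → ℝ),
      G (x + fun i => 2 * Real.pi * (μ' i : ℝ)) = G x) :
    (∫ α in Set.univ.pi (fun _ : Fin n => Set.Icc (0:ℝ) (2*Real.pi)), G (α + c))
      = ∫ α in Set.univ.pi (fun _ : Fin n => Set.Icc (0:ℝ) (2*Real.pi)), G α := by
  have h2π : (0:ℝ) < 2 * Real.pi := by positivity
  let b : Module.Basis (Fin n) ℝ (Fin n → ℝ) :=
    (Pi.basisFun ℝ (Fin n)).unitsSMul (fun _ => Units.mk0 (2*Real.pi) h2π.ne')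
  have hrepr : ∀ (x : Fin n → ℝ) i, b.repr x i = (2*Real.pi)⁻¹ * x i := by
    intro x i
    rw [show b = (Pi.basisFun ℝ (Fin n)).unitsSMul (fun _ => Units.mk0 (2*Real.pi) h2π.ne') from rfl,
      Module.Basis.repr_unitsSMul]
    simp [Units.smul_def, Pi.basisFun_repr]
  have hbi : ∀ i, b i = (2*Real.pi) • (Pi.single i 1 : Fin n → ℝ) := by
    intro i
    rw [show b = (Pi.basisFun ℝ (Fin n)).unitsSMul (fun _ => Units.mk0 (2*Real.pi) h2π.ne') from rfl,
      Module.Basis.unitsSMul_apply]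
    simp [Units.smul_def, Pi.basisFun_apply]
  set D := ZSpan.fundamentalDomain b with hDdef
  -- lattice elements
  have hlat : ∀ g ∈ span ℤ (Set.range b), ∃ μ' : Fin n → ℤ,
      g = fun i => 2 * Real.pi * (μ' i : ℝ) := by
    intro g hg
    induction hg using span_induction with
    | mem x hx =>
      obtain ⟨i, rfl⟩ := hx
      refine ⟨Pi.single i 1, ?_⟩
      rw [hbi i]; funext j
      by_cases h : j = i <;> simp [Pi.single_apply, h]
    | zero => exact ⟨0, by funext j; simp⟩
    | add x y hx hy ihx ihy =>
      obtain ⟨μ₁, rfl⟩ := ihx; obtain ⟨μ₂, rfl⟩ := ihy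
      exact ⟨μ₁ + μ₂, by funext j; simp only [Pi.add_apply]; push_cast; ring⟩
    | smul m x hx ihx =>
      obtain ⟨μ₁, rfl⟩ := ihx
      exact ⟨m • μ₁, by funext j; simp only [Pi.smul_apply, smul_eq_mul, zsmul_eq_mul]; push_cast; ring⟩
  have hGinv : ∀ (g : span ℤ (Set.range b)) (x : Fin n → ℝ), G (↑g + x) = G x := by
    intro g x
    obtain ⟨μ', hμ⟩ := hlat g g.2
    rw [hμ, add_comm]; exact hGper μ' x
  -- fundamental domains
  set Λ := (span ℤ (Set.range b)).toAddSubgroup with hΛdef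
  haveI : Countable Λ := inferInstanceAs (Countable (span ℤ (Set.range b)))
  have hfund : IsAddFundamentalDomain Λ D volume :=
    ZSpan.isAddFundamentalDomain' b volume
  have htrans : IsAddFundamentalDomain Λ ((-c) +ᵥ D) volume := by
    refine IsAddFundamentalDomain.mk' ?_ fun x => ?_
    · exact ((ZSpan.fundamentalDomain_measurableSet b).const_vadd (-c)).nullMeasurableSet
    · obtain ⟨g, hg, huniq⟩ := ZSpan.exist_unique_vadd_mem_fundamentalDomain b (c + x)
      have key : ∀ (y : Λ),
          y +ᵥ x ∈ (-c) +ᵥ D ↔ (⟨y.1, y.2⟩ : span ℤ (Set.range b)) +ᵥ (c + x) ∈ D := by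
        intro y
        rw [Set.mem_vadd_set_iff_neg_vadd_mem]
        show -(-c) + (↑y + x) ∈ D ↔ ↑y + (c + x) ∈ D
        rw [neg_neg, show c + (↑y + x) = ↑y + (c + x) by abel]
      refine ⟨⟨g.1, g.2⟩, (key _).mpr hg, fun y hy => ?_⟩
      have := huniq ⟨y.1, y.2⟩ ((key y).mp hy)
      exact Subtype.ext (congrArg Subtype.val this)
  -- a.e. equality of the Icc cube and D
  have hD : D = Set.pi Set.univ (fun _ : Fin n => Set.Ico (0:ℝ) (2*Real.pi)) := by
    ext x
    simp only [hDdef, ZSpan.mem_fundamentalDomain, hrepr, Set.mem_pi, Set.mem_univ, true_implies,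
      Set.mem_Ico]
    refine forall_congr' fun i => ?_
    rw [inv_mul_lt_iff₀ h2π, mul_one, mul_nonneg_iff_of_pos_left (inv_pos.mpr h2π)]
  have hae : (Set.univ.pi (fun _ : Fin n => Set.Icc (0:ℝ) (2*Real.pi))) =ᵐ[volume] D := by
    rw [hD]
    refine (MeasureTheory.ae_eq_of_subset_of_measure_ge
      (Set.pi_mono fun i _ => Set.Ico_subset_Icc_self) (le_of_eq ?_)
      ((MeasurableSet.univ_pi fun _ => measurableSet_Ico).nullMeasurableSet) ?_).symm
    · rw [volume_pi_pi, volume_pi_pi]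
      simp [Real.volume_Ico, Real.volume_Icc]
    · exact ((isCompact_univ_pi fun _ => isCompact_Icc).measure_lt_top).ne
  -- main chain
  calc (∫ α in Set.univ.pi (fun _ : Fin n => Set.Icc (0:ℝ) (2*Real.pi)), G (α + c))
      = ∫ α in D, G (α + c) := setIntegral_congr_set hae
    _ = ∫ α in (-c) +ᵥ D, G (α + c) := by
        refine hfund.setIntegral_eq htrans (fun g x => ?_)
        show G ((↑g + x) + c) = G (x + c)
        rw [add_assoc]; exact hGinv ⟨g.1, g.2⟩ _
    _ = ∫ α in D, G α := by
        have himg : (-c) +ᵥ D = (fun x => x + (-c)) '' D := by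
          ext y
          constructor
          · rintro ⟨d, hd, rfl⟩; exact ⟨d, hd, add_comm _ _⟩
          · rintro ⟨d, hd, rfl⟩; exact ⟨d, hd, add_comm _ _⟩
        rw [himg, (measurePreserving_add_right volume (-c)).setIntegral_image_emb
          (MeasurableEquiv.addRight (-c)).measurableEmbedding]
        refine setIntegral_congr_fun (ZSpan.fundamentalDomain_measurableSet b) fun x _ => ?_
        simp
    _ = ∫ α in Set.univ.pi (fun _ : Fin n => Set.Icc (0:ℝ) (2*Real.pi)), G α :=
        (setIntegral_congr_set hae).symm

/-- Let `𝒜 ⊆ ℝⁿ`, let `C` assign to each point of `𝒜` an alternating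
trilinear form on `ℝⁿ`, and let `f : 𝒜 × ℝⁿ → ℝ` be, for each `a ∈ 𝒜`, continuously
differentiable and `2π`-periodic in the angles.  If `∂f/∂α (a, α) ∈ ker C(a)` for all
`(a, α)`, then for every `a ∈ 𝒜` and `ν ∈ ℤⁿ` with `f̂_ν(a) ≠ 0` one has `ν ∈ ker C(a)`:
`Sp(f, a) ⊆ ℤⁿ ∩ ker C(a)`. -/
theorem statement8 (n : ℕ) (𝒜 : Set (Fin n → ℝ))
    (C : (Fin n → ℝ) → ((Fin n → ℝ) [⋀^Fin 3]→ₗ[ℝ] ℝ))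
    (f : (Fin n → ℝ) × (Fin n → ℝ) → ℝ)
    (hreg : ∀ a ∈ 𝒜, ContDiff ℝ 1 (fun α => f (a, α)))
    (hper : ∀ a ∈ 𝒜, ∀ (α : Fin n → ℝ) (ν : Fin n → ℤ),
      f (a, α + fun i => 2 * Real.pi * (ν i : ℝ)) = f (a, α))
    (hker : ∀ a ∈ 𝒜, ∀ α : Fin n → ℝ, ∀ u v : Fin n → ℝ,
      C a ![dAngle f (a, α), u, v] = 0) :
    ∀ a ∈ 𝒜, ∀ ν : Fin n → ℤ,
      fourierCoeffn (fun α => (f (a, α) : ℂ)) ν ≠ 0 →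
      ∀ u v : Fin n → ℝ, C a ![(fun i => (ν i : ℝ)), u, v] = 0 := by
  intro a ha ν hν u v
  set φ : (Fin n → ℝ) → ℝ := fun α => f (a, α) with hφdef
  have hφd : Differentiable ℝ φ := (hreg a ha).differentiable one_ne_zero
  have hupd : ∀ x : Fin n → ℝ, Function.update ![(0 : Fin n → ℝ), u, v] 0 x = ![x, u, v] := by
    intro x; funext i; fin_cases i <;> simp [Function.update]
  let L : (Fin n → ℝ) →ₗ[ℝ] ℝ :=
    { toFun := fun x => C a ![x, u, v]
      map_add' := fun x y => by
        show C a ![x + y, u, v] = C a ![x, u, v] + C a ![y, u, v]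
        rw [← hupd (x + y), ← hupd x, ← hupd y, AlternatingMap.map_update_add]
      map_smul' := fun r x => by
        show C a ![r • x, u, v] = r • C a ![x, u, v]
        rw [← hupd (r • x), ← hupd x, AlternatingMap.map_update_smul] }
  have hL : ∀ x : Fin n → ℝ, C a ![x, u, v] = ∑ k, x k * L (Pi.single k 1) := by
    intro x
    have := LinearMap.pi_apply_eq_sum_univ L x
    rw [show C a ![x, u, v] = L x from rfl, this]
    refine Finset.sum_congr rfl fun k _ => ?_
    congr 1
    · congr 1; funext j; simp [Pi.single_apply, eq_comm]
  set w : Fin n → ℝ := fun k => L (Pi.single k 1) with hwdef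
  have hwsum : ∀ x : Fin n → ℝ, x = ∑ k, x k • (Pi.single k 1 : Fin n → ℝ) := by
    intro x; funext j
    rw [Finset.sum_apply]
    simp [Pi.single_apply]
  have hfd : ∀ β : Fin n → ℝ, fderiv ℝ φ β w = 0 := by
    intro β
    have h1 : fderiv ℝ φ β w = ∑ k, w k * (dAngle f (a, β) k) := by
      conv_lhs => rw [hwsum w]
      rw [map_sum]
      refine Finset.sum_congr rfl fun k _ => ?_
      rw [ContinuousLinearMap.map_smul, smul_eq_mul]
      rfl
    rw [h1]
    have h2 : C a ![dAngle f (a, β), u, v] = 0 := hker a ha β u v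
    rw [hL] at h2
    rw [← h2]
    exact Finset.sum_congr rfl fun k _ => mul_comm _ _
  have hconst : ∀ (α : Fin n → ℝ) (t : ℝ), φ (α + t • w) = φ α := by
    intro α t
    have key : ∀ s : ℝ, HasDerivAt (fun t : ℝ => φ (α + t • w)) 0 s := by
      intro s
      have hline : HasDerivAt (fun t : ℝ => α + t • w) w s := by
        simpa using ((hasDerivAt_id s).smul_const w).const_add α
      have := ((hφd (α + s • w)).hasFDerivAt).comp_hasDerivAt s hline
      rw [hfd] at this
      exact this
    have := is_const_of_deriv_eq_zero (fun s => (key s).differentiableAt)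
      (fun s => (key s).deriv) t 0
    simpa using this
  -- the target quantity
  set c : ℝ := ∑ k, (ν k : ℝ) * w k with hcdef
  -- the integrand
  set G : (Fin n → ℝ) → ℂ := fun α =>
    (φ α : ℂ) * Complex.exp (-(Complex.I * ((∑ k, (ν k : ℝ) * α k : ℝ) : ℂ))) with hGdef
  set K : ℂ := ∫ α in Set.univ.pi (fun _ : Fin n => Set.Icc (0:ℝ) (2*Real.pi)), G α with hKdef
  have hKne : K ≠ 0 := by
    intro h0
    apply hν
    show (1 / (2 * Real.pi) ^ n : ℂ) * _ = 0
    rw [show (∫ α in Set.univ.pi (fun _ : Fin n => Set.Icc (0 : ℝ) (2 * Real.pi)),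
      ((f (a, α) : ℂ) * Complex.exp (-(Complex.I * ((∑ k, (ν k : ℝ) * α k : ℝ) : ℂ))))) = K from rfl,
      h0, mul_zero]
  -- periodicity of G
  have hGper : ∀ (μ' : Fin n → ℤ) (x : Fin n → ℝ),
      G (x + fun i => 2 * Real.pi * (μ' i : ℝ)) = G x := by
    intro μ' x
    have hφp : φ (x + fun i => 2 * Real.pi * (μ' i : ℝ)) = φ x := hper a ha x μ'
    set m : ℤ := ∑ k, ν k * μ' k with hmdef
    have hsum : (∑ k, (ν k : ℝ) * ((x + fun i => 2 * Real.pi * (μ' i : ℝ)) k))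
        = (∑ k, (ν k : ℝ) * x k) + (m : ℝ) * (2 * Real.pi) := by
      have hm : (m : ℝ) * (2 * Real.pi) = ∑ k, (ν k : ℝ) * (2 * Real.pi * (μ' k : ℝ)) := by
        rw [hmdef]
        push_cast
        rw [Finset.sum_mul]
        exact Finset.sum_congr rfl fun k _ => by ring
      rw [hm, ← Finset.sum_add_distrib]
      exact Finset.sum_congr rfl fun k _ => by simp [mul_add]
    have hexp : Complex.exp (-(Complex.I *
          ((∑ k, (ν k : ℝ) * ((x + fun i => 2 * Real.pi * (μ' i : ℝ)) k) : ℝ) : ℂ)))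
        = Complex.exp (-(Complex.I * ((∑ k, (ν k : ℝ) * x k : ℝ) : ℂ))) := by
      have hz : -(Complex.I * ((((∑ k, (ν k : ℝ) * x k) + (m : ℝ) * (2 * Real.pi)) : ℝ) : ℂ))
          = -(Complex.I * ((∑ k, (ν k : ℝ) * x k : ℝ) : ℂ))
            + (-m : ℤ) * (2 * Real.pi * Complex.I) := by
        push_cast; ring
      rw [hsum, hz, Complex.exp_add, Complex.exp_int_mul_two_pi_mul_I, mul_one]
    rw [hGdef]
    simp only
    rw [hφp, hexp]
  -- quasi-periodicity of G in the direction w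
  have hGshift : ∀ (t : ℝ) (α : Fin n → ℝ),
      G (α + t • w) = Complex.exp (-(Complex.I * ((t * c : ℝ) : ℂ))) * G α := by
    intro t α
    have hsum : (∑ k, (ν k : ℝ) * ((α + t • w) k)) = (∑ k, (ν k : ℝ) * α k) + t * c := by
      rw [hcdef, Finset.mul_sum, ← Finset.sum_add_distrib]
      refine Finset.sum_congr rfl fun k _ => ?_
      simp only [Pi.add_apply, Pi.smul_apply, smul_eq_mul]
      ring
    rw [hGdef]
    simp only
    have hz : -(Complex.I * ((((∑ k, (ν k : ℝ) * α k) + t * c) : ℝ) : ℂ))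
        = -(Complex.I * ((t * c : ℝ) : ℂ))
          + -(Complex.I * ((∑ k, (ν k : ℝ) * α k : ℝ) : ℂ)) := by
      push_cast; ring
    rw [hconst α t, hsum, hz, Complex.exp_add]
    ring
  -- shift invariance of the integral
  have hshift : ∀ t : ℝ, Complex.exp (-(Complex.I * ((t * c : ℝ) : ℂ))) * K = K := by
    intro t
    calc Complex.exp (-(Complex.I * ((t * c : ℝ) : ℂ))) * K
        = ∫ α in Set.univ.pi (fun _ : Fin n => Set.Icc (0:ℝ) (2*Real.pi)),
            Complex.exp (-(Complex.I * ((t * c : ℝ) : ℂ))) * G α := by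
          rw [hKdef, integral_const_mul]
      _ = ∫ α in Set.univ.pi (fun _ : Fin n => Set.Icc (0:ℝ) (2*Real.pi)), G (α + t • w) := by
          refine (integral_congr_ae (Filter.Eventually.of_forall fun α => ?_))
          exact (hGshift t α).symm
      _ = K := by rw [statement8_aux_shift G (t • w) hGper, hKdef]
  -- conclude c = 0
  have hc0 : c = 0 := by
    by_contra hc
    have := hshift (Real.pi / c)
    rw [div_mul_cancel₀ _ hc] at this
    rw [show -(Complex.I * ((Real.pi : ℝ) : ℂ)) = -(Real.pi * Complex.I) by ring,
      Complex.exp_neg, Complex.exp_pi_mul_I] at this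
    simp only [inv_neg, inv_one] at this
    rw [neg_one_mul] at this
    exact hKne (by linear_combination (-1/2 : ℂ) * this)
  rw [hL]
  exact hc0
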